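/- arXiv:1204.2306 — 2 statements merged into one kernel-verified Lean document; each statement's English description precedes it below -/
import Mathlib

section
/- Let T be a tree with ℓ ≥ 2 leaves. Then T is 2-sparse if and only if P(T) = ℓ − 1. -/
namespace PaperPC

open SimpleGraph

variable {V : Type*}

/-- The degree of a vertex, via the cardinality of its neighbor set. -/
noncomputable def ndeg (G : SimpleGraph V) (v : V) : ℕ := (G.neighborSet v).ncard

/-- A linear forest: an acyclic graph of maximum degree at most 2,
i.e. a vertex-disjoint union of paths.  A spanning linear subforest of `G`
is exactly a path covering of `G` (isolated vertices are one-vertex paths). -/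
def IsLinearForest (H : SimpleGraph V) : Prop :=
  H.IsAcyclic ∧ ∀ v, ndeg H v ≤ 2

/-- The number of paths of a path covering = number of connected components. -/
noncomputable def numPaths (H : SimpleGraph V) : ℕ := Nat.card H.ConnectedComponent

/-- The path covering number `P(G)`. -/
noncomputable def pathCoverNumber (G : SimpleGraph V) : ℕ :=
  sInf {k | ∃ H ≤ G, IsLinearForest H ∧ numPaths H = k}

/-- `H` is a minimum path covering of `G`. -/
def IsMinPathCover (G H : SimpleGraph V) : Prop :=
  H ≤ G ∧ IsLinearForest H ∧ numPaths H = pathCoverNumber G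

open scoped Classical in
/-- The path sequence of a path covering: the multiset of the numbers of vertices
of its paths (a multiset encodes the nondecreasing ordered sequence). -/
noncomputable def pathSeq [Fintype V] (H : SimpleGraph V) : Multiset ℕ :=
  (Finset.univ : Finset H.ConnectedComponent).val.map fun c => c.supp.ncard

/-- `G` admits a unique path sequence. -/
def UniquePathSequence [Fintype V] (G : SimpleGraph V) : Prop :=
  ∀ H₁ H₂ : SimpleGraph V, IsMinPathCover G H₁ → IsMinPathCover G H₂ →
    pathSeq H₁ = pathSeq H₂

/-- Number of leaves (vertices of degree 1). -/
noncomputable def numLeaves (G : SimpleGraph V) : ℕ := {v | ndeg G v = 1}.ncard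

/-- Number of heavy edges (edges both of whose endpoints have degree > 2). -/
noncomputable def numHeavyEdges (G : SimpleGraph V) : ℕ :=
  {e ∈ G.edgeSet | ∀ v ∈ e, 2 < ndeg G v}.ncard

/-- Number of edges. -/
noncomputable def numEdges (G : SimpleGraph V) : ℕ := G.edgeSet.ncard

/-- A graph is 2-sparse if no two adjacent vertices both have degree > 2. -/
def TwoSparse (G : SimpleGraph V) : Prop :=
  ∀ u v, G.Adj u v → ndeg G u ≤ 2 ∨ ndeg G v ≤ 2

/-- `G` is a path graph. -/
def IsPathGraph (G : SimpleGraph V) : Prop := G.IsTree ∧ ∀ v, ndeg G v ≤ 2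

/-- `G` is a cycle graph. -/
def IsCycleGraph (G : SimpleGraph V) : Prop := G.Connected ∧ ∀ v, ndeg G v = 2

/-- A generalized star: a tree with exactly one heavy vertex (the center) in which
all vines have the same number of vertices (equivalently, all leaves are at the same
distance from the center). -/
def IsGenStar (G : SimpleGraph V) : Prop :=
  G.IsTree ∧ ∃ c k, 2 < ndeg G c ∧ (∀ v, v ≠ c → ndeg G v ≤ 2) ∧
    ∀ v, ndeg G v = 1 → G.dist c v = k

/-- An L(2,1)-labeling. -/
def IsL21Labeling (G : SimpleGraph V) (f : V → ℕ) : Prop :=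
  (∀ u v, G.Adj u v → 2 ≤ Nat.dist (f u) (f v)) ∧
  (∀ u v, G.dist u v = 2 → 1 ≤ Nat.dist (f u) (f v))

/-- `λ(G)`: the least `k` such that `G` has an L(2,1)-labeling with labels in `{0,…,k}`. -/
noncomputable def lambdaNum (G : SimpleGraph V) : ℕ :=
  sInf {k | ∃ f : V → ℕ, IsL21Labeling G f ∧ ∀ v, f v ≤ k}

/-- A λ-labeling: an L(2,1)-labeling with maximum label `λ(G)`. -/
def IsLambdaLabeling (G : SimpleGraph V) (f : V → ℕ) : Prop :=
  IsL21Labeling G f ∧ (∀ v, f v ≤ lambdaNum G) ∧ ∃ v, f v = lambdaNum G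

/-- The set of holes of a labeling: unused labels `h` with `1 ≤ h ≤ λ(G) - 1`. -/
def labHoles (G : SimpleGraph V) (f : V → ℕ) : Set ℕ :=
  {h | 1 ≤ h ∧ h + 1 ≤ lambdaNum G ∧ ∀ v, f v ≠ h}

/-- The hole index `ρ(G)`: minimum number of holes over all λ-labelings. -/
noncomputable def holeIndex (G : SimpleGraph V) : ℕ :=
  sInf {k | ∃ f : V → ℕ, IsLambdaLabeling G f ∧ (labHoles G f).ncard = k}

open scoped Classical in
/-- The island sequence of a labeling: the multiset of cardinalities of the maximal
intervals `[a,b]` of consecutive integers all used by the labeling. -/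
noncomputable def islandSeq [Fintype V] (G : SimpleGraph V) (f : V → ℕ) : Multiset ℕ :=
  (((Finset.range (lambdaNum G + 1)) ×ˢ (Finset.range (lambdaNum G + 1))).filter
    (fun q => q.1 ≤ q.2 ∧ (∀ x ∈ Finset.Icc q.1 q.2, ∃ v, f v = x) ∧
      (q.1 = 0 ∨ ∀ v, f v ≠ q.1 - 1) ∧ ∀ v, f v ≠ q.2 + 1)).val.map
    fun q => q.2 - q.1 + 1

/-- `G` admits (at least) two distinct island sequences. -/
def MultipleIslandSequences [Fintype V] (G : SimpleGraph V) : Prop :=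
  ∃ f g : V → ℕ, IsLambdaLabeling G f ∧ IsLambdaLabeling G g ∧
    (labHoles G f).ncard = holeIndex G ∧ (labHoles G g).ncard = holeIndex G ∧
    islandSeq G f ≠ islandSeq G g

/-- A vine: a maximal path one of whose endpoints (`a`) is a leaf and all of whose
vertices are light.  Maximality: any light vertex adjacent to the other end already
lies on the path. -/
def IsVine (G : SimpleGraph V) {a b : V} (p : G.Walk a b) : Prop :=
  p.IsPath ∧ ndeg G a = 1 ∧ (∀ v ∈ p.support, ndeg G v ≤ 2) ∧
  ∀ c, G.Adj b c → ndeg G c ≤ 2 → c ∈ p.support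

/-- A vine with center `v`: the (heavy) vertex adjacent to the non-leaf end of the vine. -/
def IsVineWithCenter (G : SimpleGraph V) {a b : V} (p : G.Walk a b) (v : V) : Prop :=
  IsVine G p ∧ G.Adj b v ∧ 2 < ndeg G v

/-- The matching number of the subgraph of `G` induced by `S`. -/
noncomputable def matchingNumberOn (G : SimpleGraph V) (S : Set V) : ℕ :=
  sSup {k | ∃ M : Set (Sym2 V), M ⊆ G.edgeSet ∧ (∀ e ∈ M, ∀ v ∈ e, v ∈ S) ∧
    (∀ e ∈ M, ∀ f ∈ M, e ≠ f → ∀ v, v ∈ e → v ∉ f) ∧ M.ncard = k}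

/-- Labels used in the family `F`: `A`, or `B k` where `k` records the number of
vertices of each vine of the labeled generalized star that produced the label. -/
inductive Lab | A | B (k : ℕ)

/-- A labeled generalized star with center `c` whose vines have `k` vertices each
(equivalently, every leaf is at distance `k` from `c`); the degenerate case
`deg c = 2` is the convention regarding a path of length `2k` as a labeled
generalized star with two vines.  The neighbors of the center are labeled `B k`,
the other non-leaf vertices (and the center) are labeled `A`, leaves are unlabeled. -/
def IsLGenStar {W : Type*} (H : SimpleGraph W) (c : W) (k : ℕ)
    (lab : W → Option Lab) : Prop :=
  H.IsTree ∧ 2 ≤ ndeg H c ∧ (∀ v, v ≠ c → ndeg H v ≤ 2) ∧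
  (∀ v, ndeg H v = 1 → H.dist c v = k) ∧
  lab c = some Lab.A ∧
  (∀ v, H.Adj c v → lab v = some (Lab.B k)) ∧
  (∀ v, v ≠ c → ¬H.Adj c v → ndeg H v = 1 → lab v = none) ∧
  (∀ v, v ≠ c → ¬H.Adj c v → 2 ≤ ndeg H v → lab v = some Lab.A)

/-- A labeled path: a path with at least three vertices, non-leaf vertices labeled `A`. -/
def IsLPath {W : Type*} (H : SimpleGraph W) (lab : W → Option Lab) : Prop :=
  H.IsTree ∧ (∀ v, ndeg H v ≤ 2) ∧ 3 ≤ Nat.card W ∧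
  (∀ v, ndeg H v = 1 → lab v = none) ∧
  ∀ v, 2 ≤ ndeg H v → lab v = some Lab.A

/-- The induced subgraph of `T` on `s` is a labeled generalized star. -/
def LGenStarOn (T : SimpleGraph V) (s : Set V) (c : V) (k : ℕ)
    (lab : V → Option Lab) : Prop :=
  ∃ hc : c ∈ s, IsLGenStar (T.induce s) ⟨c, hc⟩ k fun v => lab v.1

/-- The induced subgraph of `T` on `s` is a labeled path. -/
def LPathOn (T : SimpleGraph V) (s : Set V) (lab : V → Option Lab) : Prop :=
  IsLPath (T.induce s) fun v => lab v.1

/-- The family `F` of labeled trees, realized as induced subgraphs (on vertex sets `s`)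
of an ambient graph `T`:  start from a labeled generalized star with at least three
vines or from a labeled path, and repeatedly attach, via a single new edge, a labeled
generalized star with at least three vines at a vertex labeled `A` (Type-1), a labeled
path by one of its non-leaf vertices at a vertex labeled `A` (Type-2), or a labeled
generalized star whose vines have the same number of vertices `k` as those of the star
that labeled `u` with `B k`, at a vertex `u` labeled `B k` (Type-3). -/
inductive InF (T : SimpleGraph V) : Set V → (V → Option Lab) → Prop
  | base_star (s : Set V) (c : V) (k : ℕ) (lab : V → Option Lab) :
      LGenStarOn T s c k lab → 3 ≤ {w ∈ s | T.Adj c w}.ncard → InF T s lab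
  | base_path (s : Set V) (lab : V → Option Lab) :
      LPathOn T s lab → InF T s lab
  | type1 (s : Set V) (lab : V → Option Lab) (t : Set V) (lab' : V → Option Lab)
      (u c : V) (k : ℕ) :
      InF T s lab → Disjoint s t → u ∈ s → c ∈ t → lab u = some Lab.A →
      LGenStarOn T t c k lab' → 3 ≤ {w ∈ t | T.Adj c w}.ncard →
      (∀ x ∈ s, ∀ y ∈ t, (T.Adj x y ↔ x = u ∧ y = c)) →
      (∀ x ∈ s, lab' x = lab x) →
      InF T (s ∪ t) lab'
  | type2 (s : Set V) (lab : V → Option Lab) (t : Set V) (lab' : V → Option Lab)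
      (u v : V) :
      InF T s lab → Disjoint s t → u ∈ s → v ∈ t → lab u = some Lab.A →
      LPathOn T t lab' → 2 ≤ {w ∈ t | T.Adj v w}.ncard →
      (∀ x ∈ s, ∀ y ∈ t, (T.Adj x y ↔ x = u ∧ y = v)) →
      (∀ x ∈ s, lab' x = lab x) →
      InF T (s ∪ t) lab'
  | type3 (s : Set V) (lab : V → Option Lab) (t : Set V) (lab' : V → Option Lab)
      (u c : V) (k : ℕ) :
      InF T s lab → Disjoint s t → u ∈ s → c ∈ t → lab u = some (Lab.B k) →
      LGenStarOn T t c k lab' →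
      (∀ x ∈ s, ∀ y ∈ t, (T.Adj x y ↔ x = u ∧ y = c)) →
      (∀ x ∈ s, lab' x = lab x) →
      InF T (s ∪ t) lab'

/-- `G` is obtained from the tree `T` by expanding each edge of `T` into a complete
graph of arbitrary order: there is an embedding `ι` of the vertices of `T` and an
assignment `b` of a block of vertices of `G` to each edge of `T` such that an original
vertex lies in the block of an edge iff it is an endpoint of that edge, blocks of
distinct edges meet only in original vertices, every vertex of `G` lies in some block,
and two distinct vertices of `G` are adjacent iff they lie in a common block. -/
def IsBlockExpansion {U W : Type*} (T : SimpleGraph U) (G : SimpleGraph W) : Prop :=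
  ∃ (ι : U ↪ W) (b : Sym2 U → Set W),
    (∀ (u : U), ∀ e ∈ T.edgeSet, (ι u ∈ b e ↔ u ∈ e)) ∧
    (∀ e ∈ T.edgeSet, ∀ f ∈ T.edgeSet, e ≠ f → b e ∩ b f ⊆ Set.range ι) ∧
    (∀ w : W, ∃ e ∈ T.edgeSet, w ∈ b e) ∧
    (∀ x y : W, G.Adj x y ↔ x ≠ y ∧ ∃ e ∈ T.edgeSet, x ∈ b e ∧ y ∈ b e)


section Aux

open Finset

variable {V : Type*}

lemma walk_decomp {G : SimpleGraph V} {u v w x : V} (p : G.Walk w x) :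
    (G.deleteEdges {s(u,v)}).Reachable w x ∨
    ((G.deleteEdges {s(u,v)}).Reachable w u ∧ (G.deleteEdges {s(u,v)}).Reachable v x) ∨
    ((G.deleteEdges {s(u,v)}).Reachable w v ∧ (G.deleteEdges {s(u,v)}).Reachable u x) := by
  induction p with
  | nil => exact Or.inl (Reachable.refl _)
  | @cons a b c hab q ih =>
    by_cases he : s(a,b) = s(u,v)
    · rw [Sym2.eq_iff] at he
      rcases he with ⟨rfl, rfl⟩ | ⟨rfl, rfl⟩
      · rcases ih with h | ⟨h1, h2⟩ | ⟨h1, h2⟩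
        · exact Or.inr (Or.inl ⟨Reachable.refl _, h⟩)
        · exact Or.inr (Or.inl ⟨Reachable.refl _, h2⟩)
        · exact Or.inl h2
      · rcases ih with h | ⟨h1, h2⟩ | ⟨h1, h2⟩
        · exact Or.inr (Or.inr ⟨Reachable.refl _, h⟩)
        · exact Or.inl h2
        · exact Or.inr (Or.inr ⟨Reachable.refl _, h2⟩)
    · have hab' : (G.deleteEdges {s(u,v)}).Adj a b := by
        rw [deleteEdges_adj]; exact ⟨hab, by simpa using he⟩
      rcases ih with h | ⟨h1, h2⟩ | ⟨h1, h2⟩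
      · exact Or.inl (hab'.reachable.trans h)
      · exact Or.inr (Or.inl ⟨hab'.reachable.trans h1, h2⟩)
      · exact Or.inr (Or.inr ⟨hab'.reachable.trans h1, h2⟩)

lemma acyclic_mono {G H : SimpleGraph V} (h : H ≤ G) (hG : G.IsAcyclic) : H.IsAcyclic := by
  intro v c hc
  exact hG (c.mapLe h) (hc.mapLe h)

lemma card_comp_deleteEdge [Fintype V] {G : SimpleGraph V} (hG : G.IsAcyclic) {u v : V}
    (huv : G.Adj u v) :
    Nat.card (G.deleteEdges {s(u,v)}).ConnectedComponent
      = Nat.card G.ConnectedComponent + 1 := by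
  classical
  set H := G.deleteEdges {s(u,v)} with hHdef
  have hmono : ∀ a b : V, H.Reachable a b → G.Reachable a b :=
    fun a b h => h.mono (deleteEdges_le _)
  have hbr : ¬ H.Reachable u v := by
    have := (isAcyclic_iff_forall_adj_isBridge.mp hG) huv
    rw [isBridge_iff] at this
    exact this
  have key : ∀ w x : V, G.Reachable w x →
      H.Reachable w x ∨ (H.Reachable w u ∧ H.Reachable v x) ∨
      (H.Reachable w v ∧ H.Reachable u x) := fun w x hr => hr.elim fun p => walk_decomp p
  let f : H.ConnectedComponent → G.ConnectedComponent :=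
    ConnectedComponent.lift G.connectedComponentMk
      (fun a b p _ => ConnectedComponent.eq.mpr (hmono a b ⟨p⟩))
  have hf : ∀ w, f (H.connectedComponentMk w) = G.connectedComponentMk w := fun w => rfl
  have houtG : ∀ c : G.ConnectedComponent, G.connectedComponentMk c.out = c :=
    fun c => c.out_eq
  let e : H.ConnectedComponent ≃ Option G.ConnectedComponent :=
  { toFun := fun d => if d = H.connectedComponentMk v then none else some (f d)
    invFun := fun o => o.elim (H.connectedComponentMk v)
      (fun c => if c = G.connectedComponentMk u then H.connectedComponentMk u
        else H.connectedComponentMk c.out)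
    left_inv := by
      intro d
      induction d using SimpleGraph.ConnectedComponent.ind with
      | _ w =>
      set d := H.connectedComponentMk w with hdw
      dsimp only
      by_cases hd : d = H.connectedComponentMk v
      · rw [if_pos hd, Option.elim_none]; exact hd.symm
      · rw [if_neg hd, Option.elim_some]
        by_cases hc : f (H.connectedComponentMk w) = G.connectedComponentMk u
        · rw [if_pos hc]
          rw [hf, ConnectedComponent.eq] at hc
          rcases key w u hc with h | ⟨h1, h2⟩ | ⟨h1, h2⟩
          · exact (ConnectedComponent.eq.mpr h.symm)
          · exact (ConnectedComponent.eq.mpr h1.symm)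
          · exact absurd (ConnectedComponent.eq.mpr h1) hd
        · rw [if_neg hc]
          have hw : G.Reachable w (f (H.connectedComponentMk w)).out := by
            rw [← ConnectedComponent.eq, hf, houtG]
          rcases key _ _ hw with h | ⟨h1, h2⟩ | ⟨h1, h2⟩
          · exact (ConnectedComponent.eq.mpr h.symm)
          · refine absurd ?_ hc
            rw [hf, ConnectedComponent.eq]
            exact hmono _ _ h1
          · exact absurd (ConnectedComponent.eq.mpr h1) hd
    right_inv := by
      rintro (_ | c)
      · simp
      · dsimp only
        rw [Option.elim_some]
        by_cases hc : c = G.connectedComponentMk u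
        · rw [if_pos hc]
          have hne : ¬ (H.connectedComponentMk u = H.connectedComponentMk v) := by
            rw [ConnectedComponent.eq]; exact hbr
          rw [if_neg hne, hf, hc]
        · rw [if_neg hc]
          have hne : ¬ (H.connectedComponentMk c.out = H.connectedComponentMk v) := by
            rw [ConnectedComponent.eq]
            intro h
            apply hc
            rw [← houtG c, ConnectedComponent.eq]
            exact ((hmono _ _ h).trans huv.symm.reachable)
          rw [if_neg hne, hf, houtG] }
  rw [Nat.card_congr e]
  haveI : Finite G.ConnectedComponent := Quot.finite _
  haveI : Fintype G.ConnectedComponent := Fintype.ofFinite _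
  simp [Nat.card_eq_fintype_card]

lemma card_comp_forest [Fintype V] {G : SimpleGraph V} (hG : G.IsAcyclic) :
    Nat.card G.ConnectedComponent + G.edgeSet.ncard = Fintype.card V := by
  classical
  generalize hn : G.edgeSet.ncard = n
  induction n generalizing G with
  | zero =>
    have hbot : G = ⊥ := by
      rw [← edgeSet_eq_empty]
      exact (Set.ncard_eq_zero G.edgeSet.toFinite).mp hn
    subst hbot
    rw [Nat.add_zero]
    have : Function.Bijective ((⊥ : SimpleGraph V).connectedComponentMk) := by
      constructor
      · intro a b hab
        exact reachable_bot.mp (ConnectedComponent.eq.mp hab)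
      · intro c
        exact c.exists_rep
    rw [← Nat.card_eq_fintype_card, Nat.card_eq_of_bijective _ this]
  | succ n ih =>
    have hne : G.edgeSet.Nonempty := by
      rw [← Set.ncard_pos G.edgeSet.toFinite]; omega
    obtain ⟨e, he⟩ := hne
    induction e using Sym2.ind with
    | _ u v =>
    have hadj : G.Adj u v := he
    have h1 := card_comp_deleteEdge hG hadj
    have h2 : (G.deleteEdges {s(u,v)}).edgeSet.ncard = n := by
      rw [edgeSet_deleteEdges]
      have := Set.ncard_diff_singleton_of_mem he
      omega
    have h3 := ih (acyclic_mono (deleteEdges_le _) hG) h2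
    omega

lemma ndeg_eq_degree [Fintype V] (G : SimpleGraph V) [DecidableRel G.Adj] (v : V) :
    ndeg G v = G.degree v := by
  rw [ndeg, SimpleGraph.degree, ← Set.ncard_coe_finset, neighborFinset_def, Set.coe_toFinset]

lemma degree_pos [Fintype V] {G : SimpleGraph V} [DecidableRel G.Adj] (hc : G.Connected)
    (h2 : 2 ≤ Fintype.card V) (v : V) : 0 < G.degree v := by
  rw [degree_pos_iff_exists_adj]
  haveI : Nontrivial V := Fintype.one_lt_card_iff_nontrivial.mp h2
  obtain ⟨w, hw⟩ := exists_ne v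
  obtain ⟨p⟩ := hc.preconnected v w
  have hnil : ¬ p.Nil := Walk.not_nil_of_ne (Ne.symm hw)
  exact ⟨_, p.adj_snd hnil⟩

lemma edgeSet_ncard_eq [Fintype V] (G : SimpleGraph V) [DecidableRel G.Adj] :
    G.edgeSet.ncard = G.edgeFinset.card := by
  rw [Set.ncard_eq_toFinset_card']
  congr 1

lemma tree_edge_ncard [Fintype V] {G : SimpleGraph V} (hG : G.IsTree) :
    G.edgeSet.ncard + 1 = Fintype.card V := by
  classical
  rw [edgeSet_ncard_eq]
  exact hG.card_edgeFinset

lemma heavy_sum [Fintype V] {T : SimpleGraph V} [DecidableRel T.Adj] (hT : T.IsTree)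
    (h2 : 2 ≤ Fintype.card V) :
    (∑ v ∈ Finset.univ.filter (fun v => 2 < T.degree v), (T.degree v - 2)) + 2
      = (Finset.univ.filter (fun v => T.degree v = 1)).card := by
  classical
  have hpos : ∀ v : V, 0 < T.degree v := degree_pos hT.isConnected h2
  have hsum : ∑ v : V, T.degree v = 2 * T.edgeFinset.card :=
    T.sum_degrees_eq_twice_card_edges
  have hedge : T.edgeFinset.card + 1 = Fintype.card V := hT.card_edgeFinset
  -- split the sum
  have hsplit1 := Finset.sum_filter_add_sum_filter_not Finset.univ
    (fun v => T.degree v ≤ 2) (fun v => T.degree v)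
  have hcards1 := Finset.card_filter_add_card_filter_not (s := Finset.univ)
    (p := fun v => T.degree v ≤ 2)
  have hsplit2 := Finset.sum_filter_add_sum_filter_not
    (Finset.univ.filter (fun v => T.degree v ≤ 2))
    (fun v => T.degree v = 1) (fun v => T.degree v)
  have hcards2 := Finset.card_filter_add_card_filter_not
    (s := Finset.univ.filter (fun v => T.degree v ≤ 2)) (p := fun v => T.degree v = 1)
  have hnot : Finset.univ.filter (fun v => ¬ T.degree v ≤ 2)
      = Finset.univ.filter (fun v => 2 < T.degree v) := by
    apply Finset.filter_congr; intro v _; simp [Nat.lt_iff_add_one_le]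
  have hfilt1 : (Finset.univ.filter (fun v => T.degree v ≤ 2)).filter
      (fun v => T.degree v = 1) = Finset.univ.filter (fun v => T.degree v = 1) := by
    rw [Finset.filter_filter]
    apply Finset.filter_congr; intro v _; constructor
    · rintro ⟨_, h⟩; exact h
    · intro h; omega
  -- on the three parts
  have e1 : ∑ v ∈ (Finset.univ.filter (fun v => T.degree v ≤ 2)).filter
      (fun v => T.degree v = 1), T.degree v
      = ((Finset.univ.filter (fun v => T.degree v = 1))).card := by
    rw [hfilt1]
    rw [Finset.sum_const_nat (m := 1) (fun v hv => (Finset.mem_filter.mp hv).2)]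
    exact Nat.mul_one _
  have e2 : ∑ v ∈ (Finset.univ.filter (fun v => T.degree v ≤ 2)).filter
      (fun v => ¬ T.degree v = 1), T.degree v
      = ((Finset.univ.filter (fun v => T.degree v ≤ 2)).filter
        (fun v => ¬ T.degree v = 1)).card * 2 := by
    refine Finset.sum_const_nat (fun v hv => ?_)
    have h1 := (Finset.mem_filter.mp hv).2
    have h2' := (Finset.mem_filter.mp (Finset.mem_filter.mp hv).1).2
    have := hpos v
    omega
  have e3 : ∑ v ∈ Finset.univ.filter (fun v => 2 < T.degree v), T.degree v
      = (∑ v ∈ Finset.univ.filter (fun v => 2 < T.degree v), (T.degree v - 2))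
        + (Finset.univ.filter (fun v => 2 < T.degree v)).card * 2 := by
    have : ∑ v ∈ Finset.univ.filter (fun v => 2 < T.degree v), T.degree v
        = ∑ v ∈ Finset.univ.filter (fun v => 2 < T.degree v), ((T.degree v - 2) + 2) := by
      refine Finset.sum_congr rfl (fun v hv => ?_)
      have := (Finset.mem_filter.mp hv).2
      omega
    rw [this, Finset.sum_add_distrib, Finset.sum_const_nat (m := 2) (fun _ _ => rfl)]
  have hfc : (Finset.univ.filter (fun v => T.degree v = 1)).card
      = ((Finset.univ.filter (fun v => T.degree v ≤ 2)).filter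
        (fun v => T.degree v = 1)).card := by rw [hfilt1]
  rw [hnot] at hsplit1 hcards1
  rw [← hsplit2, e1, e2, e3] at hsplit1
  have hcardV : (Finset.univ : Finset V).card = Fintype.card V := rfl
  omega

lemma numLeaves_eq [Fintype V] (T : SimpleGraph V) [DecidableRel T.Adj] :
    numLeaves T = (Finset.univ.filter (fun v => T.degree v = 1)).card := by
  rw [numLeaves, ← Set.ncard_coe_finset]
  congr 1
  ext v
  simp [ndeg_eq_degree]

lemma card_missing_edges [Fintype V] [DecidableEq V] {T H : SimpleGraph V} [DecidableRel T.Adj]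
    [DecidableRel H.Adj] (hle : H ≤ T) (v : V) :
    ((T.edgeFinset \ H.edgeFinset).filter (fun e => v ∈ e)).card
      = T.degree v - H.degree v := by
  classical
  have hnb : H.neighborFinset v ⊆ T.neighborFinset v := by
    intro w hw
    rw [mem_neighborFinset] at hw ⊢
    exact hle hw
  have himg : (T.edgeFinset \ H.edgeFinset).filter (fun e => v ∈ e)
      = (T.neighborFinset v \ H.neighborFinset v).image (fun w => s(v,w)) := by
    ext e
    simp only [Finset.mem_filter, Finset.mem_sdiff, Finset.mem_image, mem_edgeFinset,
      mem_neighborFinset]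
    constructor
    · rintro ⟨⟨heT, heH⟩, hv⟩
      obtain ⟨w, rfl⟩ := Sym2.mem_iff_exists.mp hv
      rw [mem_edgeSet] at heT heH
      exact ⟨w, ⟨heT, heH⟩, rfl⟩
    · rintro ⟨w, ⟨hT', hH'⟩, rfl⟩
      rw [mem_edgeSet] at *
      exact ⟨⟨hT', hH'⟩, Sym2.mem_mk_left v w⟩
  rw [himg, Finset.card_image_of_injOn, Finset.card_sdiff_of_subset hnb]
  · rfl
  · intro a ha b hb hab
    rcases Sym2.eq_iff.mp hab with ⟨_, h⟩ | ⟨h1, h2⟩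
    · exact h
    · exact h2.trans h1

lemma numPaths_deleteEdges [Fintype V] {T : SimpleGraph V} (hT : T.IsTree)
    (D : Set (Sym2 V)) (hD : D ⊆ T.edgeSet) :
    numPaths (T.deleteEdges D) = D.ncard + 1 := by
  classical
  have hac : (T.deleteEdges D).IsAcyclic := acyclic_mono (T.deleteEdges_le D) hT.IsAcyclic
  have h1 := card_comp_forest hac
  rw [edgeSet_deleteEdges] at h1
  have h2 : (T.edgeSet \ D).ncard = T.edgeSet.ncard - D.ncard :=
    Set.ncard_diff hD (Set.toFinite _)
  have h3 : D.ncard ≤ T.edgeSet.ncard := Set.ncard_le_ncard hD (Set.toFinite _)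
  have h4 : T.edgeSet.ncard + 1 = Fintype.card V := tree_edge_ncard hT
  rw [numPaths]
  omega

lemma ndeg_deleteEdges_le [Fintype V] {T : SimpleGraph V} [DecidableRel T.Adj]
    (D : Set (Sym2 V)) (R : V → Finset V)
    (hR : ∀ v, 2 < T.degree v → R v ⊆ T.neighborFinset v ∧ T.degree v ≤ (R v).card + 2)
    (hD : ∀ v, 2 < T.degree v → ∀ w ∈ R v, s(v,w) ∈ D)
    (x : V) : ndeg (T.deleteEdges D) x ≤ 2 := by
  classical
  by_cases hx : 2 < T.degree x
  · have hsub : (T.deleteEdges D).neighborSet x ⊆ ↑(T.neighborFinset x \ R x) := by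
      intro w hw
      rw [mem_neighborSet, deleteEdges_adj] at hw
      simp only [Finset.coe_sdiff, Set.mem_diff, Finset.mem_coe, mem_neighborFinset]
      exact ⟨hw.1, fun hmem => hw.2 (hD x hx w hmem)⟩
    have h1 : ndeg (T.deleteEdges D) x ≤ (T.neighborFinset x \ R x).card := by
      rw [ndeg, ← Set.ncard_coe_finset]
      exact Set.ncard_le_ncard hsub (Set.toFinite _)
    have h2 := (hR x hx).2
    have h3 : (R x).card ≤ (T.neighborFinset x).card := Finset.card_le_card (hR x hx).1
    rw [Finset.card_sdiff_of_subset (hR x hx).1] at h1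
    have h4 : (T.neighborFinset x).card = T.degree x := rfl
    omega
  · have hsub : (T.deleteEdges D).neighborSet x ⊆ T.neighborSet x := by
      intro w hw
      rw [mem_neighborSet, deleteEdges_adj] at hw
      exact hw.1
    have h1 : ndeg (T.deleteEdges D) x ≤ ndeg T x := by
      rw [ndeg, ndeg]
      exact Set.ncard_le_ncard hsub (Set.toFinite _)
    have h2' : ndeg T x = T.degree x := ndeg_eq_degree T x
    omega

lemma lower_bound [Fintype V] {T H : SimpleGraph V} (hT : T.IsTree) (hsp : TwoSparse T)
    (h2 : 2 ≤ Fintype.card V) (hle : H ≤ T) (hlf : IsLinearForest H) :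
    numLeaves T ≤ numPaths H + 1 := by
  classical
  haveI dT : DecidableRel T.Adj := Classical.decRel _
  haveI dH : DecidableRel H.Adj := Classical.decRel _
  have hleaves := numLeaves_eq T
  have e1 : numPaths H + H.edgeSet.ncard = Fintype.card V :=
    card_comp_forest hlf.1
  have e2 : T.edgeSet.ncard + 1 = Fintype.card V := tree_edge_ncard hT
  have hEsub : H.edgeFinset ⊆ T.edgeFinset := by
    intro e he
    rw [mem_edgeFinset] at he ⊢
    exact edgeSet_mono hle he
  set D : Finset (Sym2 V) := T.edgeFinset \ H.edgeFinset with hDdef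
  have hDcard : D.card = T.edgeFinset.card - H.edgeFinset.card :=
    Finset.card_sdiff_of_subset hEsub
  set heavyF : Finset V := Finset.univ.filter (fun v => 2 < T.degree v) with hheavy
  have hdisj : ∀ x ∈ heavyF, ∀ y ∈ heavyF, x ≠ y →
      Disjoint (D.filter (fun e => x ∈ e)) (D.filter (fun e => y ∈ e)) := by
    intro x hx y hy hxy
    rw [Finset.disjoint_left]
    intro e hex hey
    have hxe := (Finset.mem_filter.mp hex).2
    have hye := (Finset.mem_filter.mp hey).2
    have heT : e ∈ T.edgeSet := by
      have := (Finset.mem_sdiff.mp (Finset.mem_filter.mp hex).1).1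
      rwa [mem_edgeFinset] at this
    obtain ⟨b, rfl⟩ := Sym2.mem_iff_exists.mp hxe
    have hyb : y = b := by
      rcases Sym2.mem_iff.mp hye with h | h
      · exact absurd h.symm hxy
      · exact h
    subst hyb
    rw [mem_edgeSet] at heT
    have hxh := (Finset.mem_filter.mp hx).2
    have hyh := (Finset.mem_filter.mp hy).2
    rcases hsp x y heT with h | h <;> rw [ndeg_eq_degree] at h <;> omega
  have hbi : (heavyF.biUnion (fun v => D.filter (fun e => v ∈ e))) ⊆ D :=
    Finset.biUnion_subset.mpr (fun v _ => Finset.filter_subset _ _)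
  have hbicard : ∑ v ∈ heavyF, (T.degree v - H.degree v) ≤ D.card := by
    calc ∑ v ∈ heavyF, (T.degree v - H.degree v)
        = ∑ v ∈ heavyF, (D.filter (fun e => v ∈ e)).card := by
          refine Finset.sum_congr rfl (fun v _ => ?_)
          rw [card_missing_edges hle v]
      _ = (heavyF.biUnion (fun v => D.filter (fun e => v ∈ e))).card :=
          (Finset.card_biUnion hdisj).symm
      _ ≤ D.card := Finset.card_le_card hbi
  have hterm : ∀ v ∈ heavyF, T.degree v - 2 ≤ T.degree v - H.degree v := by
    intro v _
    have : H.degree v ≤ 2 := by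
      have := hlf.2 v
      rwa [ndeg_eq_degree] at this
    omega
  have hsum2 : ∑ v ∈ heavyF, (T.degree v - 2) ≤ ∑ v ∈ heavyF, (T.degree v - H.degree v) :=
    Finset.sum_le_sum hterm
  have hhs := heavy_sum hT h2
  have e3 : H.edgeSet.ncard = H.edgeFinset.card := edgeSet_ncard_eq H
  have e4 : T.edgeSet.ncard = T.edgeFinset.card := edgeSet_ncard_eq T
  have e5 : H.edgeFinset.card ≤ T.edgeFinset.card := Finset.card_le_card hEsub
  rw [hleaves, ← hheavy] at *
  omega

set_option maxHeartbeats 1000000 in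
lemma exists_cover_twoSparse [Fintype V] {T : SimpleGraph V} (hT : T.IsTree)
    (hsp : TwoSparse T) (h2 : 2 ≤ Fintype.card V) :
    ∃ H ≤ T, IsLinearForest H ∧ numPaths H + 1 = numLeaves T := by
  classical
  haveI dT : DecidableRel T.Adj := Classical.decRel _
  have hchoice : ∀ v : V, ∃ s : Finset V, s ⊆ T.neighborFinset v ∧
      s.card = T.degree v - 2 := by
    intro v
    refine Finset.exists_subset_card_eq ?_
    have hc : (T.neighborFinset v).card = T.degree v := rfl
    omega
  choose S hS1 hS2 using hchoice
  set heavyF : Finset V := Finset.univ.filter (fun v => 2 < T.degree v) with hheavy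
  set D : Finset (Sym2 V) := heavyF.biUnion (fun v => (S v).image (fun w => s(v,w))) with hD
  have hmemD : ∀ e, e ∈ D ↔ ∃ v, 2 < T.degree v ∧ ∃ w ∈ S v, s(v,w) = e := by
    intro e
    rw [hD]
    simp only [Finset.mem_biUnion, Finset.mem_image, hheavy, Finset.mem_filter,
      Finset.mem_univ, true_and]
    try tauto
  have hDedge : ↑D ⊆ T.edgeSet := by
    intro e he
    rw [Finset.mem_coe, hmemD] at he
    obtain ⟨v, hv, w, hw, rfl⟩ := he
    rw [mem_edgeSet]
    exact (mem_neighborFinset _ _ _).mp (hS1 v hw)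
  have hlight : ∀ v w, 2 < T.degree v → T.Adj v w → ¬ (2 < T.degree w) := by
    intro v w hv hvw
    rcases hsp v w hvw with h | h <;> rw [ndeg_eq_degree] at h <;> omega
  have hcardD : D.card = ∑ v ∈ heavyF, (T.degree v - 2) := by
    rw [hD, Finset.card_biUnion]
    · refine Finset.sum_congr rfl (fun v hv => ?_)
      rw [Finset.card_image_of_injOn, hS2]
      intro a ha b hb hab
      rcases Sym2.eq_iff.mp hab with ⟨_, h⟩ | ⟨h1, h2⟩
      · exact h
      · exact h2.trans h1
    · intro x hx y hy hxy
      rw [Function.onFun, Finset.disjoint_left]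
      rintro e he1 he2
      simp only [Finset.mem_image] at he1 he2
      obtain ⟨a, ha, rfl⟩ := he1
      obtain ⟨b, hb, heq⟩ := he2
      have hxh := (Finset.mem_filter.mp hx).2
      have hyh := (Finset.mem_filter.mp hy).2
      rcases Sym2.eq_iff.mp heq with ⟨h1, h2⟩ | ⟨h1, h2⟩
      · exact hxy h1.symm
      · have haxy : T.Adj x y := by
          have h3 := (mem_neighborFinset _ _ _).mp (hS1 x ha)
          rwa [← h1] at h3
        exact hlight x y hxh haxy hyh
  clear_value D
  refine ⟨T.deleteEdges ↑D, T.deleteEdges_le _,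
    ⟨acyclic_mono (T.deleteEdges_le _) hT.IsAcyclic, ?_⟩, ?_⟩
  · intro x
    refine @ndeg_deleteEdges_le V _ T dT (↑D) S (fun v hv => ⟨hS1 v, ?_⟩) ?_ x
    · have hc : (T.neighborFinset v).card = T.degree v := rfl
      rw [hS2]
      omega
    · intro v hv w hw
      rw [Finset.mem_coe, hmemD]
      exact ⟨v, hv, w, hw, rfl⟩
  · rw [numPaths_deleteEdges hT ↑D hDedge, Set.ncard_coe_finset, hcardD]
    have hhs := heavy_sum hT h2
    rw [← hheavy] at hhs
    have hnl := numLeaves_eq T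
    omega

set_option maxHeartbeats 1000000 in
lemma exists_cover_heavyEdge [Fintype V] {T : SimpleGraph V} (hT : T.IsTree)
    (h2 : 2 ≤ Fintype.card V) {u₀ v₀ : V} (hadj : T.Adj u₀ v₀)
    (hu : 2 < ndeg T u₀) (hv : 2 < ndeg T v₀) :
    ∃ H ≤ T, IsLinearForest H ∧ numPaths H + 2 ≤ numLeaves T := by
  classical
  haveI dT : DecidableRel T.Adj := Classical.decRel _
  rw [ndeg_eq_degree] at hu hv
  have hne : u₀ ≠ v₀ := hadj.ne
  have hchoice : ∀ v : V, ∃ s : Finset V, s ⊆ T.neighborFinset v \ {u₀, v₀} ∧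
      s.card = T.degree v - 2 - (if v = u₀ ∨ v = v₀ then 1 else 0) := by
    intro v
    refine Finset.exists_subset_card_eq ?_
    have hc : (T.neighborFinset v).card = T.degree v := rfl
    have hone := Finset.le_card_sdiff ({u₀, v₀} : Finset V) (T.neighborFinset v)
    have hcard2 : ({u₀, v₀} : Finset V).card ≤ 2 :=
      le_trans (Finset.card_insert_le _ _) (by simp)
    split_ifs <;> omega
  choose S hS1 hS2 using hchoice
  set heavyF : Finset V := Finset.univ.filter (fun v => 2 < T.degree v) with hheavy
  set D : Finset (Sym2 V) :=
    insert s(u₀,v₀) (heavyF.biUnion (fun v => (S v).image (fun w => s(v,w)))) with hD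
  have hSnb : ∀ v, S v ⊆ T.neighborFinset v := fun v =>
    (hS1 v).trans Finset.sdiff_subset
  have hDedge : ↑D ⊆ T.edgeSet := by
    intro e he
    rw [Finset.mem_coe, hD, Finset.mem_insert] at he
    rcases he with rfl | he
    · rwa [mem_edgeSet]
    · rw [Finset.mem_biUnion] at he
      obtain ⟨v, hv', he⟩ := he
      rw [Finset.mem_image] at he
      obtain ⟨w, hw, rfl⟩ := he
      rw [mem_edgeSet]
      exact (mem_neighborFinset _ _ _).mp (hSnb v hw)
  have hnotmem : ∀ v, u₀ ∉ S v ∧ v₀ ∉ S v := by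
    intro v
    refine ⟨fun hmem => ?_, fun hmem => ?_⟩
    · have h := (Finset.mem_sdiff.mp (hS1 v hmem)).2
      exact h (by simp)
    · have h := (Finset.mem_sdiff.mp (hS1 v hmem)).2
      exact h (by simp)
  set R : V → Finset V := fun v =>
    if v = u₀ then insert v₀ (S v) else if v = v₀ then insert u₀ (S v) else S v with hR
  have hRnb : ∀ v, 2 < T.degree v → R v ⊆ T.neighborFinset v ∧
      T.degree v ≤ (R v).card + 2 := by
    intro v hv'
    have hc : (T.neighborFinset v).card = T.degree v := rfl
    have hnm := hnotmem v
    by_cases h1 : v = u₀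
    · simp only [hR, if_pos h1]
      constructor
      · intro w hw
        rcases Finset.mem_insert.mp hw with rfl | hw
        · exact (mem_neighborFinset _ _ _).mpr (h1 ▸ hadj)
        · exact hSnb _ hw
      · rw [Finset.card_insert_of_notMem hnm.2, hS2]
        have hif : (if v = u₀ ∨ v = v₀ then 1 else 0) = 1 := by simp [h1]
        rw [hif]
        omega
    · by_cases h2' : v = v₀
      · simp only [hR, if_neg h1, if_pos h2']
        constructor
        · intro w hw
          rcases Finset.mem_insert.mp hw with rfl | hw
          · exact (mem_neighborFinset _ _ _).mpr (h2' ▸ hadj.symm)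
          · exact hSnb _ hw
        · rw [Finset.card_insert_of_notMem hnm.1, hS2]
          have hif : (if v = u₀ ∨ v = v₀ then 1 else 0) = 1 := by simp [h2']
          rw [hif]
          omega
      · simp only [hR, if_neg h1, if_neg h2']
        refine ⟨hSnb v, ?_⟩
        rw [hS2]
        have hif : (if v = u₀ ∨ v = v₀ then 1 else 0) = 0 := by simp [h1, h2']
        rw [hif]
        omega
  have hDmem : ∀ v, 2 < T.degree v → ∀ w ∈ R v, s(v,w) ∈ (↑D : Set (Sym2 V)) := by
    intro v hv' w hw
    have hbm : w ∈ S v → s(v,w) ∈ D := by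
      intro hmem
      rw [hD, Finset.mem_insert]
      refine Or.inr (Finset.mem_biUnion.mpr ⟨v, ?_, Finset.mem_image_of_mem _ hmem⟩)
      rw [hheavy]
      simp [hv']
    rw [Finset.mem_coe]
    by_cases h1 : v = u₀
    · simp only [hR, if_pos h1] at hw
      rcases Finset.mem_insert.mp hw with rfl | hw
      · rw [hD, h1]
        exact Finset.mem_insert_self _ _
      · exact hbm hw
    · by_cases h2' : v = v₀
      · simp only [hR, if_neg h1, if_pos h2'] at hw
        rcases Finset.mem_insert.mp hw with rfl | hw
        · rw [hD, h2', Sym2.eq_swap]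
          exact Finset.mem_insert_self _ _
        · exact hbm hw
      · simp only [hR, if_neg h1, if_neg h2'] at hw
        exact hbm hw
  have huh : u₀ ∈ heavyF := by rw [hheavy]; simp [hu]
  have hvh : v₀ ∈ heavyF := by rw [hheavy]; simp [hv]
  have hsum_e : ∑ v ∈ heavyF, (if v = u₀ ∨ v = v₀ then 1 else 0) = 2 := by
    have hfilt : heavyF.filter (fun v => v = u₀ ∨ v = v₀) = {u₀, v₀} := by
      ext v
      simp only [Finset.mem_filter, Finset.mem_insert, Finset.mem_singleton]
      constructor
      · rintro ⟨_, h⟩; exact h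
      · rintro (rfl | rfl)
        · exact ⟨huh, Or.inl rfl⟩
        · exact ⟨hvh, Or.inr rfl⟩
    have hcf := Finset.card_filter (fun v => v = u₀ ∨ v = v₀) heavyF
    rw [← hcf, hfilt]
    exact Finset.card_pair hne
  have hcardD : D.card + 1 ≤ ∑ v ∈ heavyF, (T.degree v - 2) := by
    have hb1 : D.card ≤ (heavyF.biUnion (fun v => (S v).image (fun w => s(v,w)))).card + 1 := by
      rw [hD]
      exact Finset.card_insert_le _ _
    have hb2 : (heavyF.biUnion (fun v => (S v).image (fun w => s(v,w)))).card
        ≤ ∑ v ∈ heavyF, (S v).card :=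
      le_trans Finset.card_biUnion_le (Finset.sum_le_sum (fun v _ => Finset.card_image_le))
    have hsplit : ∑ v ∈ heavyF, ((S v).card + (if v = u₀ ∨ v = v₀ then 1 else 0))
        = ∑ v ∈ heavyF, (T.degree v - 2) := by
      refine Finset.sum_congr rfl (fun v hv' => ?_)
      have hdeg : 2 < T.degree v := (Finset.mem_filter.mp hv').2
      rw [hS2]
      split_ifs <;> omega
    rw [Finset.sum_add_distrib, hsum_e] at hsplit
    omega
  clear_value D R
  refine ⟨T.deleteEdges ↑D, T.deleteEdges_le _,
    ⟨acyclic_mono (T.deleteEdges_le _) hT.IsAcyclic,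
      fun x => @ndeg_deleteEdges_le V _ T dT (↑D) R hRnb hDmem x⟩, ?_⟩
  rw [numPaths_deleteEdges hT ↑D hDedge, Set.ncard_coe_finset]
  have hhs := heavy_sum hT h2
  rw [← hheavy] at hhs
  have hnl := numLeaves_eq T
  omega

end Aux

/-- **Theorem (Statement 1).** Let `T` be a tree with `ℓ ≥ 2` leaves.
Then `T` is 2-sparse if and only if `P(T) = ℓ − 1`. -/
theorem tree_twoSparse_iff_pathCoverNumber {V : Type*} [Fintype V] (T : SimpleGraph V)
    (hT : T.IsTree) (hl : 2 ≤ numLeaves T) :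
    TwoSparse T ↔ (pathCoverNumber T : ℤ) = numLeaves T - 1 := by
  classical
  haveI dT : DecidableRel T.Adj := Classical.decRel _
  have h2 : 2 ≤ Fintype.card V := by
    have h := numLeaves_eq T
    have hle := Finset.card_le_card (Finset.filter_subset (fun v => T.degree v = 1)
      (Finset.univ : Finset V))
    have hc : (Finset.univ : Finset V).card = Fintype.card V := rfl
    omega
  constructor
  · intro hsp
    obtain ⟨H, hle, hlf, hnum⟩ := exists_cover_twoSparse hT hsp h2
    have hmem : numPaths H ∈ {k | ∃ H ≤ T, IsLinearForest H ∧ numPaths H = k} :=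
      ⟨H, hle, hlf, rfl⟩
    have hub : pathCoverNumber T ≤ numPaths H := Nat.sInf_le hmem
    have hmemInf : ∃ H' ≤ T, IsLinearForest H' ∧ numPaths H' = pathCoverNumber T :=
      Nat.sInf_mem (Set.nonempty_of_mem hmem)
    obtain ⟨H', hle', hlf', hnum'⟩ := hmemInf
    have hlb := lower_bound hT hsp h2 hle' hlf'
    omega
  · intro hP
    by_contra hns
    unfold TwoSparse at hns
    push_neg at hns
    obtain ⟨u₀, v₀, hadj, hu, hv⟩ := hns
    obtain ⟨H, hle, hlf, hnum⟩ := exists_cover_heavyEdge hT h2 hadj hu hv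
    have hub : pathCoverNumber T ≤ numPaths H :=
      Nat.sInf_le ⟨H, hle, hlf, rfl⟩
    omega

end PaperPC
end

section
/- Let T be a tree with ℓ ≥ 2 leaves and h heavy edges. Then T is general 2-sparse (i.e., every heavy vertex of T has at least two light neighbors) if and only if P(T) = ℓ − h − 1. -/
namespace PaperPC

open SimpleGraph

variable {V : Type*}

lemma reach_decomp {H : SimpleGraph V} {x y u v : V} (w : H.Walk u v) :
    (H.deleteEdges {s(x,y)}).Reachable u v ∨
    ((H.deleteEdges {s(x,y)}).Reachable u x ∧ (H.deleteEdges {s(x,y)}).Reachable y v) ∨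
    ((H.deleteEdges {s(x,y)}).Reachable u y ∧ (H.deleteEdges {s(x,y)}).Reachable x v) := by
  set H' := H.deleteEdges {s(x,y)} with hH'
  induction w with
  | nil => exact Or.inl (Reachable.refl _)
  | @cons a b c hab p ih =>
    by_cases he : s(a, b) = s(x, y)
    · rw [Sym2.eq_iff] at he
      rcases he with ⟨rfl, rfl⟩ | ⟨rfl, rfl⟩
      · rcases ih with h | ⟨h1, h2⟩ | ⟨h1, h2⟩
        · exact Or.inr (Or.inl ⟨Reachable.refl _, h⟩)
        · exact Or.inr (Or.inl ⟨Reachable.refl _, h2⟩)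
        · exact Or.inl h2
      · rcases ih with h | ⟨h1, h2⟩ | ⟨h1, h2⟩
        · exact Or.inr (Or.inr ⟨Reachable.refl _, h⟩)
        · exact Or.inl h2
        · exact Or.inr (Or.inr ⟨Reachable.refl _, h2⟩)
    · have hab' : H'.Adj a b := by
        rw [hH', deleteEdges_adj]
        exact ⟨hab, by simpa using he⟩
      rcases ih with h | ⟨h1, h2⟩ | ⟨h1, h2⟩
      · exact Or.inl (hab'.reachable.trans h)
      · exact Or.inr (Or.inl ⟨hab'.reachable.trans h1, h2⟩)
      · exact Or.inr (Or.inr ⟨hab'.reachable.trans h1, h2⟩)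

lemma card_cc_delete [Finite V] (H : SimpleGraph V) {x y : V} (hxy : H.Adj x y)
    (hbr : ¬(H.deleteEdges {s(x,y)}).Reachable x y) :
    Nat.card (H.deleteEdges {s(x,y)}).ConnectedComponent = Nat.card H.ConnectedComponent + 1 := by
  classical
  set H' := H.deleteEdges {s(x,y)} with hH'
  have hle : H' ≤ H := by rw [hH']; exact deleteEdges_le _
  let φ : H'.ConnectedComponent → H.ConnectedComponent :=
    ConnectedComponent.map (Hom.ofLE hle)
  have hφ : ∀ a : V, φ (H'.connectedComponentMk a) = H.connectedComponentMk a := fun a => rfl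
  let ψ : H'.ConnectedComponent → H.ConnectedComponent ⊕ Unit := fun c =>
    if c = H'.connectedComponentMk y then Sum.inr () else Sum.inl (φ c)
  have hbij : Function.Bijective ψ := by
    constructor
    · intro c c' hcc
      induction c using ConnectedComponent.ind with | _ a =>
      induction c' using ConnectedComponent.ind with | _ b =>
      by_cases h1 : H'.connectedComponentMk a = H'.connectedComponentMk y <;>
        by_cases h2 : H'.connectedComponentMk b = H'.connectedComponentMk y
      · rw [h1, h2]
      · simp only [ψ, if_pos h1, if_neg h2] at hcc
        exact absurd hcc (by simp)
      · simp only [ψ, if_neg h1, if_pos h2] at hcc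
        exact absurd hcc (by simp)
      · simp only [ψ, if_neg h1, if_neg h2, hφ, Sum.inl.injEq] at hcc
        have hr : H.Reachable a b := (ConnectedComponent.eq).mp hcc
        obtain ⟨w⟩ := hr
        rcases reach_decomp (x := x) (y := y) w with h | ⟨ha, hb⟩ | ⟨ha, hb⟩
        · exact ConnectedComponent.sound h
        · exact absurd (ConnectedComponent.sound hb.symm) h2
        · exact absurd (ConnectedComponent.sound ha) h1
    · rintro (c | ⟨⟩)
      · induction c using ConnectedComponent.ind with | _ d =>
        by_cases hd : H'.Reachable d y
        · refine ⟨H'.connectedComponentMk x, ?_⟩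
          have hne : H'.connectedComponentMk x ≠ H'.connectedComponentMk y := by
            intro h; exact hbr ((ConnectedComponent.eq).mp h)
          simp only [ψ, if_neg hne, hφ, Sum.inl.injEq]
          exact ConnectedComponent.sound (hxy.reachable.trans (hd.mono hle).symm)
        · refine ⟨H'.connectedComponentMk d, ?_⟩
          have hne : H'.connectedComponentMk d ≠ H'.connectedComponentMk y := by
            intro h; exact hd ((ConnectedComponent.eq).mp h)
          simp only [ψ, if_neg hne, hφ]
      · exact ⟨H'.connectedComponentMk y, by simp [ψ]⟩
  rw [Nat.card_eq_of_bijective ψ hbij, Nat.card_sum]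
  simp

lemma card_cc_add_ncard_edges [Fintype V] :
    ∀ (m : ℕ) (H : SimpleGraph V), H.edgeSet.ncard = m → H.IsAcyclic →
      Nat.card H.ConnectedComponent + H.edgeSet.ncard = Fintype.card V := by
  intro m
  induction m with
  | zero =>
    intro H hm _
    have hfin : H.edgeSet.Finite := Set.toFinite _
    have : H.edgeSet = ∅ := (Set.ncard_eq_zero hfin).mp hm
    have hbot : H = ⊥ := edgeSet_eq_empty.mp this
    subst hbot
    rw [hm, add_zero]
    have : Function.Bijective ((⊥ : SimpleGraph V).connectedComponentMk) := by
      constructor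
      · intro a b hab
        exact reachable_bot.mp ((ConnectedComponent.eq).mp hab)
      · intro c
        induction c using ConnectedComponent.ind with | _ d => exact ⟨d, rfl⟩
    rw [← Nat.card_eq_fintype_card]
    exact (Nat.card_eq_of_bijective _ this).symm
  | succ m ih =>
    intro H hm hac
    have hne : H.edgeSet.Nonempty := by
      rw [← Set.ncard_pos (Set.toFinite _), hm]; omega
    obtain ⟨e, he⟩ := hne
    induction e using Sym2.ind with | _ x y =>
    have hxy : H.Adj x y := he
    set H' := H.deleteEdges {s(x,y)} with hH'
    have hE' : H'.edgeSet = H.edgeSet \ {s(x,y)} := edgeSet_deleteEdges _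
    have hcard' : H'.edgeSet.ncard = m := by
      rw [hE', Set.ncard_diff_singleton_of_mem he, hm]
      omega
    have hac' : H'.IsAcyclic := fun v c hc =>
      hac (c.mapLe (deleteEdges_le _)) (hc.mapLe _)
    have hbr : ¬H'.Reachable x y := by
      have := (isAcyclic_iff_forall_adj_isBridge.mp hac) hxy
      rw [isBridge_iff] at this
      exact this
    have := ih H' hcard' hac'
    rw [card_cc_delete H hxy hbr] at this
    omega

open Finset in
lemma sum_deg_le_card_edges [Fintype V] [DecidableEq V] (G : SimpleGraph V) [DecidableRel G.Adj]
    (S : Finset V) (hS : ∀ x y, G.Adj x y → x ∈ S → y ∉ S) :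
    ∑ v ∈ S, G.degree v ≤ G.edgeFinset.card := by
  have h1 : ∑ v ∈ S, G.degree v = (S.sigma fun v => univ.filter (G.Adj v)).card := by
    rw [Finset.card_sigma]
    refine Finset.sum_congr rfl fun v _ => ?_
    rw [degree, neighborFinset_eq_filter]
  rw [h1]
  apply Finset.card_le_card_of_injOn (fun p => s(p.1, p.2))
  · rintro ⟨a, b⟩ hp
    simp only [Finset.mem_coe, Finset.mem_sigma, Finset.mem_filter] at hp
    rw [Finset.mem_coe, mem_edgeFinset, mem_edgeSet]
    exact hp.2.2
  · rintro ⟨a, b⟩ hp ⟨c, d⟩ hq hpq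
    obtain ⟨hp1, hp2⟩ := Finset.mem_sigma.mp hp
    obtain ⟨hq1, hq2⟩ := Finset.mem_sigma.mp hq
    rw [Finset.mem_filter] at hp2 hq2
    have hpq' : s(a, b) = s(c, d) := hpq
    rw [Sym2.eq_iff] at hpq'
    rcases hpq' with ⟨rfl, rfl⟩ | ⟨rfl, rfl⟩
    · rfl
    · exact absurd hq1 (hS a b hp2.2 hp1)

open Finset in
lemma sum_deg_eq_twice_card_edges [Fintype V] [DecidableEq V] (G : SimpleGraph V)
    [DecidableRel G.Adj] (S : Finset V) (hS : ∀ x y, G.Adj x y → x ∈ S) :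
    ∑ v ∈ S, G.degree v = 2 * G.edgeFinset.card := by
  rw [← sum_degrees_eq_twice_card_edges]
  rw [← Finset.sum_filter_add_sum_filter_not univ (· ∈ S)]
  have h0 : ∑ v ∈ univ.filter (¬ · ∈ S), G.degree v = 0 := by
    refine Finset.sum_eq_zero fun v hv => ?_
    simp only [Finset.mem_filter] at hv
    rw [degree, Finset.card_eq_zero]
    ext w
    simp only [mem_neighborFinset, Finset.notMem_empty, iff_false]
    exact fun h => hv.2 (hS v w h)
  rw [h0, add_zero, Finset.filter_univ_mem]

open Finset in
lemma sum_heavy_deg [Fintype V] [DecidableEq V] (T : SimpleGraph V) [DecidableRel T.Adj]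
    (hT : T.IsTree) (hl2 : 2 ≤ (univ.filter (fun v => T.degree v = 1)).card) :
    ∑ v ∈ univ.filter (fun v => 2 < T.degree v), ((T.degree v : ℤ) - 2)
      = (univ.filter (fun v => T.degree v = 1)).card - 2 := by
  have hn : 2 ≤ Fintype.card V := le_trans hl2 (by simpa using Finset.card_filter_le univ _)
  have hdeg1 : ∀ v, 1 ≤ T.degree v := by
    intro v
    obtain ⟨w, hw⟩ := Fintype.exists_ne_of_one_lt_card (by omega) v
    obtain ⟨p⟩ := hT.isConnected.preconnected v w
    cases p with
    | nil => exact absurd rfl hw.symm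
    | cons h _ => rw [Nat.one_le_iff_ne_zero, ← Nat.pos_iff_ne_zero, degree_pos_iff_exists_adj]
                  exact ⟨_, h⟩
  have htot : ∑ v : V, ((T.degree v : ℤ) - 2) = -2 := by
    rw [Finset.sum_sub_distrib]
    have : ∑ v : V, (T.degree v : ℤ) = 2 * T.edgeFinset.card := by
      exact_mod_cast congrArg (Nat.cast : ℕ → ℤ) (T.sum_degrees_eq_twice_card_edges)
    rw [this, Finset.sum_const, Finset.card_univ]
    have := hT.card_edgeFinset
    push_cast [← this]
    ring
  rw [← Finset.sum_filter_add_sum_filter_not univ (fun v => 2 < T.degree v)] at htot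
  have hlight : ∑ v ∈ univ.filter (fun v => ¬ 2 < T.degree v), ((T.degree v : ℤ) - 2)
      = -(univ.filter (fun v => T.degree v = 1)).card := by
    rw [← Finset.sum_filter_add_sum_filter_not (univ.filter (fun v => ¬ 2 < T.degree v))
      (fun v => T.degree v = 1)]
    have e1 : (univ.filter (fun v => ¬ 2 < T.degree v)).filter (fun v => T.degree v = 1)
        = univ.filter (fun v => T.degree v = 1) := by
      rw [Finset.filter_filter]
      apply Finset.filter_congr
      intro v _
      constructor
      · rintro ⟨_, h⟩; exact h
      · intro h; exact ⟨by omega, h⟩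
    have e2 : ∑ v ∈ (univ.filter (fun v => ¬ 2 < T.degree v)).filter
        (fun v => ¬ T.degree v = 1), ((T.degree v : ℤ) - 2) = 0 := by
      apply Finset.sum_eq_zero
      intro v hv
      simp only [Finset.mem_filter] at hv
      have h1 := hdeg1 v
      have : T.degree v = 2 := by omega
      rw [this]; ring
    have e3 : ∑ v ∈ univ.filter (fun v => T.degree v = 1), ((T.degree v : ℤ) - 2)
        = ∑ _v ∈ univ.filter (fun v => T.degree v = 1), (-1 : ℤ) := by
      apply Finset.sum_congr rfl
      intro v hv
      simp only [Finset.mem_filter] at hv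
      rw [hv.2]; norm_num
    rw [e1, e2, add_zero, e3, Finset.sum_const]
    simp
  rw [hlight] at htot
  linarith

open Finset in
lemma key_lower_bound [Fintype V] [DecidableEq V] (T : SimpleGraph V) [DecidableRel T.Adj]
    (hT : T.IsTree) (hl2 : 2 ≤ (univ.filter (fun v => T.degree v = 1)).card)
    (H : SimpleGraph V) [DecidableRel H.Adj] (hle : H ≤ T) (hdeg : ∀ v, H.degree v ≤ 2) :
    (univ.filter (fun v => T.degree v = 1)).card ≤ Nat.card H.ConnectedComponent
        + (T.edgeFinset.filter (fun e => ∀ v ∈ e, 2 < T.degree v)).card + 1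
    ∧ ((∃ v0, 2 < T.degree v0 ∧
          ((T.neighborFinset v0).filter (fun w => T.degree w ≤ 2)).card ≤ 1) →
        (univ.filter (fun v => T.degree v = 1)).card ≤ Nat.card H.ConnectedComponent
          + (T.edgeFinset.filter (fun e => ∀ v ∈ e, 2 < T.degree v)).card) := by
  classical
  set Hv := univ.filter (fun v => 2 < T.degree v) with hHv
  set L := univ.filter (fun v => T.degree v = 1) with hL
  set HE := T.edgeFinset.filter (fun e => ∀ v ∈ e, 2 < T.degree v) with hHE
  -- difference graphs
  set D : SimpleGraph V := ⟨fun x y => T.Adj x y ∧ ¬ H.Adj x y,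
    ⟨fun x y h => ⟨h.1.symm, fun hh => h.2 hh.symm⟩⟩,
    ⟨fun x h => T.loopless.irrefl x h.1⟩⟩ with hD
  set D1 : SimpleGraph V := ⟨fun x y => D.Adj x y ∧ (2 < T.degree x ∧ 2 < T.degree y),
    ⟨fun x y h => ⟨h.1.symm, h.2.2, h.2.1⟩⟩, ⟨fun x h => D.loopless.irrefl x h.1⟩⟩ with hD1
  set D2 : SimpleGraph V := ⟨fun x y => D.Adj x y ∧ ¬(2 < T.degree x ∧ 2 < T.degree y),
    ⟨fun x y h => ⟨h.1.symm, fun hh => h.2 ⟨hh.2, hh.1⟩⟩⟩, ⟨fun x h => D.loopless.irrefl x h.1⟩⟩ with hD2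
  -- F0 : degree split T = H + D
  have hF0 : ∀ v, T.degree v = H.degree v + D.degree v := by
    intro v
    have h1 : (T.neighborFinset v).filter (fun w => H.Adj v w) = H.neighborFinset v := by
      ext w; simp only [Finset.mem_filter, mem_neighborFinset]
      exact ⟨fun h => h.2, fun h => ⟨hle h, h⟩⟩
    have h2 : (T.neighborFinset v).filter (fun w => ¬ H.Adj v w) = D.neighborFinset v := by
      ext w; simp only [Finset.mem_filter, mem_neighborFinset, hD]
    rw [degree, degree, degree, ← h1, ← h2,
      Finset.card_filter_add_card_filter_not]
  -- F1 : degree split D = D1 + D2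
  have hF1 : ∀ v, D.degree v = D1.degree v + D2.degree v := by
    intro v
    have h1 : (D.neighborFinset v).filter (fun w => 2 < T.degree v ∧ 2 < T.degree w)
        = D1.neighborFinset v := by
      ext w; simp only [Finset.mem_filter, mem_neighborFinset, hD1]
    have h2 : (D.neighborFinset v).filter (fun w => ¬(2 < T.degree v ∧ 2 < T.degree w))
        = D2.neighborFinset v := by
      ext w; simp only [Finset.mem_filter, mem_neighborFinset, hD2]
    rw [degree, degree, degree, ← h1, ← h2,
      Finset.card_filter_add_card_filter_not]
  -- F2 : edges split
  have hEsub : H.edgeFinset ⊆ T.edgeFinset := by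
    intro e he
    rw [mem_edgeFinset] at he ⊢
    exact edgeSet_mono hle he
  have hED : D.edgeFinset = T.edgeFinset \ H.edgeFinset := by
    ext e
    induction e using Sym2.ind with | _ a b =>
    simp only [Finset.mem_sdiff, mem_edgeFinset, mem_edgeSet, hD]
  have hF2 : D.edgeFinset.card = T.edgeFinset.card - H.edgeFinset.card := by
    rw [hED, Finset.card_sdiff_of_subset hEsub]
  -- F3 : D edges split into D1 and D2
  have hED1 : D1.edgeFinset = D.edgeFinset.filter (fun e => ∀ v ∈ e, 2 < T.degree v) := by
    ext e
    induction e using Sym2.ind with | _ a b =>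
    simp only [Finset.mem_filter, mem_edgeFinset, mem_edgeSet, hD1, Sym2.mem_iff]
    constructor
    · rintro ⟨h, h1, h2⟩
      exact ⟨h, by rintro v (rfl | rfl) <;> assumption⟩
    · rintro ⟨h, hall⟩
      exact ⟨h, hall a (Or.inl rfl), hall b (Or.inr rfl)⟩
  have hED2 : D2.edgeFinset = D.edgeFinset.filter (fun e => ¬ ∀ v ∈ e, 2 < T.degree v) := by
    ext e
    induction e using Sym2.ind with | _ a b =>
    simp only [Finset.mem_filter, mem_edgeFinset, mem_edgeSet, hD2, Sym2.mem_iff]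
    constructor
    · rintro ⟨h, h1⟩
      refine ⟨h, fun hall => h1 ⟨hall a (Or.inl rfl), hall b (Or.inr rfl)⟩⟩
    · rintro ⟨h, h1⟩
      refine ⟨h, fun hc => h1 ?_⟩
      rintro v (rfl | rfl)
      · exact hc.1
      · exact hc.2
  have hF3 : D.edgeFinset.card = D1.edgeFinset.card + D2.edgeFinset.card := by
    rw [hED1, hED2, Finset.card_filter_add_card_filter_not]
  -- F4 : D1 edges are heavy edges of T
  have hF4 : D1.edgeFinset ⊆ HE := by
    intro e he
    induction e using Sym2.ind with | _ a b =>
    rw [mem_edgeFinset, mem_edgeSet] at he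
    rw [hHE, Finset.mem_filter, mem_edgeFinset, mem_edgeSet]
    refine ⟨he.1.1, ?_⟩
    rintro v hv
    rw [Sym2.mem_iff] at hv
    rcases hv with rfl | rfl
    · exact he.2.1
    · exact he.2.2
  -- F5 : handshake for D1 over Hv
  have hF5 : ∑ v ∈ Hv, D1.degree v = 2 * D1.edgeFinset.card := by
    apply sum_deg_eq_twice_card_edges
    intro x y hxy
    rw [hHv, Finset.mem_filter]
    exact ⟨Finset.mem_univ _, hxy.2.1⟩
  -- F6 : D2 bound over Hv
  have hF6 : ∑ v ∈ Hv, D2.degree v ≤ D2.edgeFinset.card := by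
    apply sum_deg_le_card_edges
    intro x y hxy hx
    rw [hHv, Finset.mem_filter] at hx ⊢
    intro hy
    exact hxy.2 ⟨hx.2, hy.2⟩
  -- F7 : the degree identity
  have hF7 : ∑ v ∈ Hv, ((T.degree v : ℤ) - 2) = L.card - 2 := sum_heavy_deg T hT hl2
  -- F8 : acyclicity & component count for H
  have hacH : H.IsAcyclic := fun v c hc => hT.IsAcyclic (c.mapLe hle) (hc.mapLe _)
  have hcc : Nat.card H.ConnectedComponent + H.edgeSet.ncard = Fintype.card V :=
    card_cc_add_ncard_edges _ H rfl hacH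
  have hccE : Nat.card H.ConnectedComponent + H.edgeFinset.card = Fintype.card V := by
    rwa [Set.ncard_eq_toFinset_card'] at hcc
  have hTE : T.edgeFinset.card + 1 = Fintype.card V := hT.card_edgeFinset
  -- main chain
  have hchain : ∀ (extra : ℕ), (∑ v ∈ Hv, ((T.degree v : ℤ) - 2)) + extra ≤ ∑ v ∈ Hv, (D.degree v : ℤ) →
      (L.card : ℤ) - 2 + extra ≤ D1.edgeFinset.card + D.edgeFinset.card := by
    intro extra hsum
    have h1 : ∑ v ∈ Hv, (D.degree v : ℤ) = ∑ v ∈ Hv, (D1.degree v : ℤ) + ∑ v ∈ Hv, (D2.degree v : ℤ) := by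
      rw [← Finset.sum_add_distrib]
      apply Finset.sum_congr rfl
      intro v _
      exact_mod_cast congrArg (Nat.cast : ℕ → ℤ) (hF1 v)
    have h5 : ∑ v ∈ Hv, (D1.degree v : ℤ) = 2 * D1.edgeFinset.card := by exact_mod_cast hF5
    have h6 : ∑ v ∈ Hv, (D2.degree v : ℤ) ≤ D2.edgeFinset.card := by exact_mod_cast hF6
    have h3 : (D.edgeFinset.card : ℤ) = D1.edgeFinset.card + D2.edgeFinset.card := by
      exact_mod_cast hF3
    rw [hF7] at hsum
    linarith
  have hfinal : ∀ (extra : ℕ), (∑ v ∈ Hv, ((T.degree v : ℤ) - 2)) + extra ≤ ∑ v ∈ Hv, (D.degree v : ℤ) →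
      (L.card : ℤ) + extra ≤ Nat.card H.ConnectedComponent + D1.edgeFinset.card + 1 := by
    intro extra hsum
    have := hchain extra hsum
    have hD' : (D.edgeFinset.card : ℤ) = T.edgeFinset.card - H.edgeFinset.card := by
      rw [hF2]
      have : H.edgeFinset.card ≤ T.edgeFinset.card := Finset.card_le_card hEsub
      push_cast [Nat.cast_sub this]
      ring
    have e1 : (Nat.card H.ConnectedComponent : ℤ) + H.edgeFinset.card = Fintype.card V := by
      exact_mod_cast hccE
    have e2 : (T.edgeFinset.card : ℤ) + 1 = Fintype.card V := by exact_mod_cast hTE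
    linarith
  -- basic inequality : D.degree v ≥ T.degree v - 2 on Hv
  have hbase : ∀ v ∈ Hv, ((T.degree v : ℤ) - 2) ≤ (D.degree v : ℤ) := by
    intro v _
    have h0 := hF0 v
    have h2 := hdeg v
    omega
  have hD1HE : (D1.edgeFinset.card : ℤ) ≤ HE.card := by exact_mod_cast Finset.card_le_card hF4
  have hpart1 := hfinal 0 (by simpa using Finset.sum_le_sum hbase)
  constructor
  · omega
  · rintro ⟨v0, hv0, hlight⟩
    by_cases hcase : D1.edgeFinset.card = HE.card
    · -- all heavy edges are in D; degree at v0 gives a strict improvement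
      have hEq : D1.edgeFinset = HE := Finset.eq_of_subset_of_card_le hF4 (le_of_eq hcase.symm)
      have hv0mem : v0 ∈ Hv := by rw [hHv, Finset.mem_filter]; exact ⟨Finset.mem_univ _, hv0⟩
      have hsub : (T.neighborFinset v0).filter (fun w => ¬ T.degree w ≤ 2)
          ⊆ D.neighborFinset v0 := by
        intro w hw
        rw [Finset.mem_filter, mem_neighborFinset] at hw
        have hheavyedge : s(v0, w) ∈ HE := by
          rw [hHE, Finset.mem_filter, mem_edgeFinset, mem_edgeSet]
          refine ⟨hw.1, ?_⟩
          intro v hv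
          rw [Sym2.mem_iff] at hv
          rcases hv with rfl | rfl
          · exact hv0
          · omega
        rw [← hEq, mem_edgeFinset, mem_edgeSet] at hheavyedge
        rw [mem_neighborFinset]
        exact hheavyedge.1
      have hcard0 : ((T.neighborFinset v0).filter (fun w => T.degree w ≤ 2)).card
          + ((T.neighborFinset v0).filter (fun w => ¬ T.degree w ≤ 2)).card = T.degree v0 :=
        Finset.card_filter_add_card_filter_not _
      have hDdeg : T.degree v0 - 1 ≤ D.degree v0 := by
        have h' := Finset.card_le_card hsub
        have hdd : D.degree v0 = (D.neighborFinset v0).card := rfl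
        omega
      have hstrict : ∑ v ∈ Hv, ((T.degree v : ℤ) - 2) < ∑ v ∈ Hv, (D.degree v : ℤ) := by
        apply Finset.sum_lt_sum hbase
        refine ⟨v0, hv0mem, ?_⟩
        have : T.degree v0 - 1 ≤ D.degree v0 := hDdeg
        omega
      have h1 := hfinal 1 (by omega)
      omega
    · have : D1.edgeFinset.card < HE.card :=
        lt_of_le_of_ne (Finset.card_le_card hF4) hcase
      omega

open Finset in
lemma key_construction [Fintype V] [DecidableEq V] (T : SimpleGraph V) [DecidableRel T.Adj]
    (hT : T.IsTree) (hl2 : 2 ≤ (univ.filter (fun v => T.degree v = 1)).card)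
    (hsp : ∀ v, 2 < T.degree v →
      2 ≤ ((T.neighborFinset v).filter (fun w => T.degree w ≤ 2)).card) :
    ∃ H : SimpleGraph V, H ≤ T ∧ H.IsAcyclic ∧ (∀ v, (H.neighborSet v).ncard ≤ 2) ∧
      Nat.card H.ConnectedComponent
        + (T.edgeFinset.filter (fun e => ∀ v ∈ e, 2 < T.degree v)).card + 1
        ≤ (univ.filter (fun v => T.degree v = 1)).card := by
  classical
  set Hv := univ.filter (fun v => 2 < T.degree v) with hHv
  set L := univ.filter (fun v => T.degree v = 1) with hL
  set HE := T.edgeFinset.filter (fun e => ∀ v ∈ e, 2 < T.degree v) with hHE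
  have hch : ∀ v, 2 < T.degree v →
      ∃ t ⊆ (T.neighborFinset v).filter (fun w => T.degree w ≤ 2), t.card = 2 :=
    fun v hv => Finset.exists_subset_card_eq (hsp v hv)
  set K : V → Finset V := fun v => if h : 2 < T.degree v then (hch v h).choose else ∅ with hKdef
  have hK : ∀ v, 2 < T.degree v →
      K v ⊆ (T.neighborFinset v).filter (fun w => T.degree w ≤ 2) ∧ (K v).card = 2 := by
    intro v h
    simp only [hKdef, dif_pos h]
    exact ⟨(hch v h).choose_spec.1, (hch v h).choose_spec.2⟩
  have hKlight : ∀ v, 2 < T.degree v → ∀ w ∈ K v, T.Adj v w ∧ T.degree w ≤ 2 := by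
    intro v hv w hw
    have := (hK v hv).1 hw
    rw [Finset.mem_filter, mem_neighborFinset] at this
    exact this
  set H : SimpleGraph V :=
    { Adj := fun x y => T.Adj x y ∧ (2 < T.degree x → y ∈ K x) ∧ (2 < T.degree y → x ∈ K y),
      symm := ⟨by intro x y h; exact ⟨h.1.symm, h.2.2, h.2.1⟩⟩,
      loopless := ⟨by intro x h; exact T.loopless.irrefl x h.1⟩ } with hH
  have hle : H ≤ T := by intro a b h; exact h.1
  have hacH : H.IsAcyclic := fun v c hc => hT.IsAcyclic (c.mapLe hle) (hc.mapLe _)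
  have hnbrheavy : ∀ v, 2 < T.degree v → H.neighborFinset v = K v := by
    intro v hv
    ext w
    rw [mem_neighborFinset]
    constructor
    · rintro ⟨_, h1, _⟩; exact h1 hv
    · intro hw
      obtain ⟨hadj, hlw⟩ := hKlight v hv w hw
      exact ⟨hadj, fun _ => hw, fun h2 => absurd hlw (by omega)⟩
  have hdegheavy : ∀ v, 2 < T.degree v → H.degree v = 2 := by
    intro v hv
    rw [degree, hnbrheavy v hv, (hK v hv).2]
  have hdegH : ∀ v, H.degree v ≤ 2 := by
    intro v
    by_cases hv : 2 < T.degree v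
    · rw [hdegheavy v hv]
    · have hsub : H.neighborFinset v ⊆ T.neighborFinset v := by
        intro w hw
        rw [mem_neighborFinset] at hw ⊢
        exact hw.1
      have := Finset.card_le_card hsub
      have hd : H.degree v = (H.neighborFinset v).card := rfl
      have hd2 : T.degree v = (T.neighborFinset v).card := rfl
      omega
  -- difference graphs
  set D : SimpleGraph V := ⟨fun x y => T.Adj x y ∧ ¬ H.Adj x y,
    ⟨fun x y h => ⟨h.1.symm, fun hh => h.2 hh.symm⟩⟩,
    ⟨fun x h => T.loopless.irrefl x h.1⟩⟩ with hD
  set D1 : SimpleGraph V := ⟨fun x y => D.Adj x y ∧ (2 < T.degree x ∧ 2 < T.degree y),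
    ⟨fun x y h => ⟨h.1.symm, h.2.2, h.2.1⟩⟩, ⟨fun x h => D.loopless.irrefl x h.1⟩⟩ with hD1
  set D2 : SimpleGraph V := ⟨fun x y => D.Adj x y ∧ ¬(2 < T.degree x ∧ 2 < T.degree y),
    ⟨fun x y h => ⟨h.1.symm, fun hh => h.2 ⟨hh.2, hh.1⟩⟩⟩, ⟨fun x h => D.loopless.irrefl x h.1⟩⟩ with hD2
  have hDheavy : ∀ x y, D.Adj x y → 2 < T.degree x ∨ 2 < T.degree y := by
    intro x y hxy
    by_contra hcon
    push_neg at hcon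
    exact hxy.2 ⟨hxy.1, fun h => absurd h (by omega), fun h => absurd h (by omega)⟩
  have hF0 : ∀ v, T.degree v = H.degree v + D.degree v := by
    intro v
    have h1 : (T.neighborFinset v).filter (fun w => H.Adj v w) = H.neighborFinset v := by
      ext w; simp only [Finset.mem_filter, mem_neighborFinset]
      exact ⟨fun h => h.2, fun h => ⟨hle h, h⟩⟩
    have h2 : (T.neighborFinset v).filter (fun w => ¬ H.Adj v w) = D.neighborFinset v := by
      ext w; simp only [Finset.mem_filter, mem_neighborFinset, hD]
    rw [degree, degree, degree, ← h1, ← h2,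
      Finset.card_filter_add_card_filter_not]
  have hF1 : ∀ v, D.degree v = D1.degree v + D2.degree v := by
    intro v
    have h1 : (D.neighborFinset v).filter (fun w => 2 < T.degree v ∧ 2 < T.degree w)
        = D1.neighborFinset v := by
      ext w; simp only [Finset.mem_filter, mem_neighborFinset, hD1]
    have h2 : (D.neighborFinset v).filter (fun w => ¬(2 < T.degree v ∧ 2 < T.degree w))
        = D2.neighborFinset v := by
      ext w; simp only [Finset.mem_filter, mem_neighborFinset, hD2]
    rw [degree, degree, degree, ← h1, ← h2,
      Finset.card_filter_add_card_filter_not]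
  have hEsub : H.edgeFinset ⊆ T.edgeFinset := by
    intro e he
    rw [mem_edgeFinset] at he ⊢
    exact edgeSet_mono hle he
  have hED : D.edgeFinset = T.edgeFinset \ H.edgeFinset := by
    ext e
    induction e using Sym2.ind with | _ a b =>
    simp only [Finset.mem_sdiff, mem_edgeFinset, mem_edgeSet, hD]
  have hF2 : D.edgeFinset.card = T.edgeFinset.card - H.edgeFinset.card := by
    rw [hED, Finset.card_sdiff_of_subset hEsub]
  have hED1 : D1.edgeFinset = D.edgeFinset.filter (fun e => ∀ v ∈ e, 2 < T.degree v) := by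
    ext e
    induction e using Sym2.ind with | _ a b =>
    simp only [Finset.mem_filter, mem_edgeFinset, mem_edgeSet, hD1, Sym2.mem_iff]
    constructor
    · rintro ⟨h, h1, h2⟩
      exact ⟨h, by rintro v (rfl | rfl) <;> assumption⟩
    · rintro ⟨h, hall⟩
      exact ⟨h, hall a (Or.inl rfl), hall b (Or.inr rfl)⟩
  have hED2 : D2.edgeFinset = D.edgeFinset.filter (fun e => ¬ ∀ v ∈ e, 2 < T.degree v) := by
    ext e
    induction e using Sym2.ind with | _ a b =>
    simp only [Finset.mem_filter, mem_edgeFinset, mem_edgeSet, hD2, Sym2.mem_iff]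
    constructor
    · rintro ⟨h, h1⟩
      refine ⟨h, fun hall => h1 ⟨hall a (Or.inl rfl), hall b (Or.inr rfl)⟩⟩
    · rintro ⟨h, h1⟩
      refine ⟨h, fun hc => h1 ?_⟩
      rintro v (rfl | rfl)
      · exact hc.1
      · exact hc.2
  have hF3 : D.edgeFinset.card = D1.edgeFinset.card + D2.edgeFinset.card := by
    rw [hED1, hED2, Finset.card_filter_add_card_filter_not]
  -- all heavy edges of T are exactly the D1 edges
  have hEqHE : D1.edgeFinset = HE := by
    apply Finset.Subset.antisymm
    · intro e he
      induction e using Sym2.ind with | _ a b =>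
      rw [mem_edgeFinset, mem_edgeSet] at he
      rw [hHE, Finset.mem_filter, mem_edgeFinset, mem_edgeSet]
      refine ⟨he.1.1, ?_⟩
      rintro v hv
      rw [Sym2.mem_iff] at hv
      rcases hv with rfl | rfl
      · exact he.2.1
      · exact he.2.2
    · intro e he
      induction e using Sym2.ind with | _ a b =>
      rw [hHE, Finset.mem_filter, mem_edgeFinset, mem_edgeSet] at he
      have ha : 2 < T.degree a := he.2 a (by rw [Sym2.mem_iff]; left; rfl)
      have hb : 2 < T.degree b := he.2 b (by rw [Sym2.mem_iff]; right; rfl)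
      rw [mem_edgeFinset, mem_edgeSet]
      refine ⟨⟨he.1, ?_⟩, ha, hb⟩
      rintro ⟨_, h1, _⟩
      have := (hKlight a ha b (h1 ha)).2
      omega
  -- sums
  have hF5 : ∑ v ∈ Hv, D1.degree v = 2 * D1.edgeFinset.card := by
    apply sum_deg_eq_twice_card_edges
    intro x y hxy
    rw [hHv, Finset.mem_filter]
    exact ⟨Finset.mem_univ _, hxy.2.1⟩
  have hF6 : ∑ v ∈ univ.filter (fun v => ¬ 2 < T.degree v), D2.degree v
      ≤ D2.edgeFinset.card := by
    apply sum_deg_le_card_edges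
    intro x y hxy hx
    rw [Finset.mem_filter] at hx ⊢
    intro hy
    rcases hDheavy x y hxy.1 with h | h
    · exact hx.2 h
    · exact hy.2 h
  -- sum of D-degrees over heavy vertices
  have hsumD : (↑(∑ v ∈ Hv, D.degree v) : ℤ) = (L.card : ℤ) - 2 := by
    have h7 := sum_heavy_deg T hT hl2
    rw [← hHv, ← hL] at h7
    rw [← h7, Nat.cast_sum]
    apply Finset.sum_congr rfl
    intro v hv
    rw [hHv, Finset.mem_filter] at hv
    have h0 := hF0 v
    have h2 := hdegheavy v hv.2
    omega
  have hhand : ∑ v ∈ univ, D2.degree v = 2 * D2.edgeFinset.card :=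
    sum_degrees_eq_twice_card_edges _
  have hsplit : ∑ v ∈ univ, D2.degree v = ∑ v ∈ Hv, D2.degree v
      + ∑ v ∈ univ.filter (fun v => ¬ 2 < T.degree v), D2.degree v := by
    rw [hHv]
    exact (Finset.sum_filter_add_sum_filter_not univ _ _).symm
  have hsumsplit : ∑ v ∈ Hv, D.degree v = ∑ v ∈ Hv, D1.degree v + ∑ v ∈ Hv, D2.degree v := by
    rw [← Finset.sum_add_distrib]
    exact Finset.sum_congr rfl fun v _ => hF1 v
  have hEC : D1.edgeFinset.card = HE.card := by rw [hEqHE]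
  have hle' : H.edgeFinset.card ≤ T.edgeFinset.card := Finset.card_le_card hEsub
  have hcc : Nat.card H.ConnectedComponent + H.edgeSet.ncard = Fintype.card V :=
    card_cc_add_ncard_edges _ H rfl hacH
  have hccE : Nat.card H.ConnectedComponent + H.edgeFinset.card = Fintype.card V := by
    rwa [Set.ncard_eq_toFinset_card'] at hcc
  have hTE : T.edgeFinset.card + 1 = Fintype.card V := hT.card_edgeFinset
  refine ⟨H, hle, hacH, ?_, ?_⟩
  · intro v
    have he : (H.neighborSet v).ncard = H.degree v := by
      rw [degree, neighborFinset_def, ← Set.ncard_eq_toFinset_card']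
    rw [he]
    exact hdegH v
  · omega


/-- **Theorem (Statement 3).** Let `T` be a tree with `ℓ ≥ 2` leaves and `h` heavy
edges.  Then `T` is general 2-sparse (every heavy vertex has at least two light
neighbors) if and only if `P(T) = ℓ − h − 1`. -/
theorem tree_generalTwoSparse_iff {V : Type*} [Fintype V] (T : SimpleGraph V)
    (hT : T.IsTree) (hl : 2 ≤ numLeaves T) :
    (∀ v, 2 < ndeg T v → 2 ≤ {w | T.Adj v w ∧ ndeg T w ≤ 2}.ncard) ↔
      (pathCoverNumber T : ℤ) = numLeaves T - numHeavyEdges T - 1 := by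
  classical
  have hnd : ∀ (G : SimpleGraph V) (v : V), ndeg G v = G.degree v := by
    intro G v
    rw [ndeg, degree, neighborFinset_def, ← Set.ncard_eq_toFinset_card']
  have hLeq : numLeaves T = (Finset.univ.filter (fun v => T.degree v = 1)).card := by
    rw [numLeaves]
    rw [show {v | ndeg T v = 1} = ↑(Finset.univ.filter (fun v => T.degree v = 1)) by
      ext v; simp [hnd]]
    rw [Set.ncard_coe_finset]
  have hHEeq : numHeavyEdges T
      = (T.edgeFinset.filter (fun e => ∀ v ∈ e, 2 < T.degree v)).card := by
    rw [numHeavyEdges]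
    rw [show {e ∈ T.edgeSet | ∀ v ∈ e, 2 < ndeg T v}
        = ↑(T.edgeFinset.filter (fun e => ∀ v ∈ e, 2 < T.degree v)) by
      ext e
      simp only [Set.mem_setOf_eq, Finset.coe_filter, mem_edgeFinset, hnd]]
    rw [Set.ncard_coe_finset]
  have hl2 : 2 ≤ (Finset.univ.filter (fun v => T.degree v = 1)).card := by
    rw [← hLeq]; exact hl
  have hnbr : ∀ v, {w | T.Adj v w ∧ ndeg T w ≤ 2}
      = ↑((T.neighborFinset v).filter (fun w => T.degree w ≤ 2)) := by
    intro v
    ext w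
    simp [hnd, mem_neighborFinset]
  -- the set of achievable numbers of paths
  have hbotmem : numPaths (⊥ : SimpleGraph V)
      ∈ {k | ∃ H ≤ T, IsLinearForest H ∧ numPaths H = k} := by
    refine ⟨⊥, bot_le, ⟨isAcyclic_bot, fun v => ?_⟩, rfl⟩
    have hns : (⊥ : SimpleGraph V).neighborSet v = ∅ := by ext w; simp
    rw [ndeg, hns, Set.ncard_empty]
    omega
  have hPmem : pathCoverNumber T ∈ {k | ∃ H ≤ T, IsLinearForest H ∧ numPaths H = k} :=
    Nat.sInf_mem ⟨_, hbotmem⟩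
  obtain ⟨H0, hle0, ⟨hac0, hnd0⟩, hnum0⟩ := hPmem
  have hdeg0 : ∀ v, H0.degree v ≤ 2 := by
    intro v
    rw [← hnd]
    exact hnd0 v
  have hlow := key_lower_bound T hT hl2 H0 hle0 hdeg0
  constructor
  · intro hsp
    have hsp' : ∀ v, 2 < T.degree v →
        2 ≤ ((T.neighborFinset v).filter (fun w => T.degree w ≤ 2)).card := by
      intro v hv
      have := hsp v (by rw [hnd]; exact hv)
      rwa [hnbr v, Set.ncard_coe_finset] at this
    obtain ⟨H, hle, hac, hd2, hcount⟩ := key_construction T hT hl2 hsp'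
    have hmemH : numPaths H ∈ {k | ∃ H ≤ T, IsLinearForest H ∧ numPaths H = k} :=
      ⟨H, hle, ⟨hac, fun v => hd2 v⟩, rfl⟩
    have hPle : pathCoverNumber T ≤ Nat.card H.ConnectedComponent := Nat.sInf_le hmemH
    have h1 := hlow.1
    have hh0 : Nat.card H0.ConnectedComponent = pathCoverNumber T := hnum0
    rw [hLeq, hHEeq]
    omega
  · intro hPC
    by_contra hcon
    push_neg at hcon
    obtain ⟨v0, hv0, hsmall⟩ := hcon
    have hv0' : 2 < T.degree v0 := by rw [← hnd]; exact hv0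
    have hsmall' : ((T.neighborFinset v0).filter (fun w => T.degree w ≤ 2)).card ≤ 1 := by
      rw [hnbr v0, Set.ncard_coe_finset] at hsmall
      omega
    have h2 := hlow.2 ⟨v0, hv0', hsmall'⟩
    have hh0 : Nat.card H0.ConnectedComponent = pathCoverNumber T := hnum0
    rw [hLeq, hHEeq] at hPC
    omega

end PaperPC
end
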